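/- Fix 1 ≤ p ≤ ∞. Let F : ℝ × ℝ³ → ℂ be measurable and define the retarded potential (WF)(t,x) := ∫_{ℝ³} F(t − |x−y|, y)/(4π|x−y|) dy, which is the Duhamel term ∫_{s<t} sin((t−s)√(−Δ))/√(−Δ) F(s) ds for the free wave equation. Then for every x ∈ ℝ³, ‖(WF)(·,x)‖_{L^p_t(ℝ)} ≤ (1/4π) ∫_{ℝ³} ‖F(·,y)‖_{L^p_t(ℝ)} / |x−y| dy. Consequently ‖WF‖_{L^∞_x L^p_t} ≤ (1/4π) ‖ y ↦ ‖F(·,y)‖_{L^p_t} ‖_K, where ‖·‖_K is the Kato norm. -/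

import Mathlib

set_option autoImplicit false

open MeasureTheory ENNReal Real

noncomputable section

/-- `ℝ³` as a Euclidean space. -/
abbrev R3 : Type := EuclideanSpace ℝ (Fin 3)

/-- The retarded potential: the Duhamel term
`(WF)(t,x) = ∫_{ℝ³} F(t − |x−y|, y)/(4π|x−y|) dy` for the free wave equation. -/
def retardedPotential (F : ℝ → R3 → ℂ) (t : ℝ) (x : R3) : ℂ :=
  ∫ y : R3, (4 * π * ‖x - y‖)⁻¹ • F (t - ‖x - y‖) y

/-- The (global) Kato norm of a nonnegative (extended-real-valued) function on `ℝ³`. -/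
def katoNormE (g : R3 → ℝ≥0∞) : ℝ≥0∞ :=
  ⨆ y : R3, ∫⁻ x : R3, g x / (‖x - y‖₊ : ℝ≥0∞)

section Aux

variable {α β : Type*} [MeasurableSpace α] [MeasurableSpace β]
  {μ : Measure α} {ν : Measure β}

lemma my_iSup_rpow {ι : Sort*} [Nonempty ι] {f : ι → ℝ≥0∞} {r : ℝ} (hr : 0 < r) :
    (⨆ n, f n) ^ r = ⨆ n, f n ^ r := by
  refine Monotone.map_iSup_of_continuousAt (f := fun x : ℝ≥0∞ => x ^ r) ?_ ?_ ?_
  · exact ENNReal.continuous_rpow_const.continuousAt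
  · exact fun a b hab => ENNReal.rpow_le_rpow hab hr.le
  · simp [ENNReal.zero_rpow_of_pos hr]

/-- `L^∞`-version of Minkowski's integral inequality, for `ℝ≥0∞`-valued functions. -/
lemma essSup_lintegral_le [SigmaFinite μ] [SFinite ν] {H : α → β → ℝ≥0∞}
    (hH : Measurable (Function.uncurry H)) :
    essSup (fun t => ∫⁻ y, H t y ∂ν) μ ≤ ∫⁻ y, essSup (fun t => H t y) μ ∂ν := by
  set R := ∫⁻ y, essSup (fun t => H t y) μ ∂ν with hR
  by_contra hcon
  push_neg at hcon
  obtain ⟨c, hRc, hc⟩ := exists_between hcon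
  set φ : α → ℝ≥0∞ := fun t => ∫⁻ y, H t y ∂ν with hφ
  have hφm : Measurable φ := hH.lintegral_prod_right'
  have hne : μ {t | c < φ t} ≠ 0 := by
    intro h0
    have hle : essSup φ μ ≤ c :=
      essSup_le_of_ae_le c (ae_iff.2 (by simpa [not_le] using h0))
    exact absurd (hc.trans_le hle) (lt_irrefl c)
  obtain ⟨A, hAm, hAs, hA0, hAfin⟩ :=
    Measure.exists_subset_measure_lt_top (measurableSet_lt measurable_const hφm)
      (pos_iff_ne_zero.2 hne)
  have key : c * μ A ≤ R * μ A := by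
    calc c * μ A = ∫⁻ _ in A, c ∂μ := (setLIntegral_const A c).symm
    _ ≤ ∫⁻ t in A, φ t ∂μ := setLIntegral_mono hφm fun t ht => (hAs ht).le
    _ = ∫⁻ y, ∫⁻ t in A, H t y ∂μ ∂ν := lintegral_lintegral_swap hH.aemeasurable
    _ ≤ ∫⁻ y, essSup (fun t => H t y) μ * μ A ∂ν := by
        refine lintegral_mono fun y => ?_
        calc ∫⁻ t in A, H t y ∂μ ≤ ∫⁻ _ in A, essSup (fun t => H t y) μ ∂μ :=
              lintegral_mono_ae (ae_restrict_of_ae (ENNReal.ae_le_essSup _))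
        _ = essSup (fun t => H t y) μ * μ A := setLIntegral_const _ _
    _ = R * μ A := lintegral_mul_const' _ _ hAfin.ne
  exact absurd ((ENNReal.mul_le_mul_iff_left hA0.ne' hAfin.ne).1 key) (not_le.2 hRc)

/-- Minkowski's integral inequality, finite case. -/
lemma lintegral_rpow_lintegral_le_aux [SFinite μ] [SFinite ν] {H : α → β → ℝ≥0∞}
    (hH : Measurable (Function.uncurry H)) {p q : ℝ} (hpq : p.HolderConjugate q)
    (hfin : ∫⁻ t, (∫⁻ y, H t y ∂ν) ^ p ∂μ ≠ ∞) :
    (∫⁻ t, (∫⁻ y, H t y ∂ν) ^ p ∂μ) ^ (1/p) ≤ ∫⁻ y, (∫⁻ t, H t y ^ p ∂μ) ^ (1/p) ∂ν := by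
  have hHt : ∀ t, Measurable (fun y => H t y) := fun t => by
    exact hH.comp measurable_prodMk_left
  have hHy : ∀ y, Measurable (fun t => H t y) := fun y => by
    exact hH.comp measurable_prodMk_right
  set φ : α → ℝ≥0∞ := fun t => ∫⁻ y, H t y ∂ν with hφ
  set I := ∫⁻ t, φ t ^ p ∂μ with hI
  set R := ∫⁻ y, (∫⁻ t, H t y ^ p ∂μ) ^ (1/p) ∂ν with hRdef
  have hp0 : (0:ℝ) < p := hpq.pos
  have hq0 : (0:ℝ) < q := hpq.symm.pos
  by_cases hI0 : I = 0
  · rw [hI0, ENNReal.zero_rpow_of_pos (by positivity)]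
    exact zero_le
  have hφm : Measurable φ := hH.lintegral_prod_right'
  have hp1 : (1:ℝ) < p := hpq.lt
  have step1 : ∀ t, φ t ^ p = φ t ^ (p-1) * φ t := by
    intro t
    conv_lhs => rw [show p = (p-1) + 1 by ring]
    rw [ENNReal.rpow_add_of_nonneg _ _ (by linarith) zero_le_one, ENNReal.rpow_one]
  have hmix : Measurable (Function.uncurry fun t y => φ t ^ (p-1) * H t y) := by
    exact ((ENNReal.continuous_rpow_const.measurable).comp (hφm.comp measurable_fst)).mul hH
  have key : I ≤ I ^ (1/q) * R := by
    calc I = ∫⁻ t, ∫⁻ y, φ t ^ (p-1) * H t y ∂ν ∂μ := by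
          refine lintegral_congr fun t => ?_
          rw [step1 t, lintegral_const_mul _ (hHt t)]
    _ = ∫⁻ y, ∫⁻ t, φ t ^ (p-1) * H t y ∂μ ∂ν := lintegral_lintegral_swap hmix.aemeasurable
    _ ≤ ∫⁻ y, I ^ (1/q) * (∫⁻ t, H t y ^ p ∂μ) ^ (1/p) ∂ν := by
        refine lintegral_mono fun y => ?_
        have hold := ENNReal.lintegral_mul_le_Lp_mul_Lq μ hpq.symm
          (f := fun t => φ t ^ (p-1)) (g := fun t => H t y)
          (((ENNReal.continuous_rpow_const.measurable).comp hφm).aemeasurable)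
          ((hHy y).aemeasurable)
        have heq : ∫⁻ t, (φ t ^ (p-1)) ^ q ∂μ = I := by
          refine lintegral_congr fun t => ?_
          rw [← ENNReal.rpow_mul, hpq.sub_one_mul_conj]
        calc ∫⁻ t, φ t ^ (p-1) * H t y ∂μ
            ≤ (∫⁻ t, (φ t ^ (p-1)) ^ q ∂μ) ^ (1/q) * (∫⁻ t, H t y ^ p ∂μ) ^ (1/p) := hold
        _ = I ^ (1/q) * (∫⁻ t, H t y ^ p ∂μ) ^ (1/p) := by rw [heq]
    _ = I ^ (1/q) * R :=
        lintegral_const_mul' _ _ (ENNReal.rpow_ne_top_of_nonneg (by positivity) hfin)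
  have hIq_ne0 : I ^ (1/q) ≠ 0 := by
    simp [ENNReal.rpow_eq_zero_iff, hI0, hfin, not_lt.2 (by positivity : (0:ℝ) ≤ 1/q)]
  have hIq_ne_top : I ^ (1/q) ≠ ∞ := ENNReal.rpow_ne_top_of_nonneg (by positivity) hfin
  have hmain : I ^ (1/p) * I ^ (1/q) ≤ R * I ^ (1/q) := by
    rw [← ENNReal.rpow_add_of_nonneg _ _ (by positivity) (by positivity),
      show 1/p + 1/q = 1 by rw [one_div, one_div]; exact hpq.inv_add_inv_eq_one,
      ENNReal.rpow_one]
    exact key.trans_eq (mul_comm _ _)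
  exact (ENNReal.mul_le_mul_iff_left hIq_ne0 hIq_ne_top).1 hmain

/-- **Minkowski's integral inequality** for `ℝ≥0∞`-valued functions. -/
lemma lintegral_rpow_lintegral_le [SigmaFinite μ] [SigmaFinite ν] {H : α → β → ℝ≥0∞}
    (hH : Measurable (Function.uncurry H)) {p : ℝ} (hp : 1 ≤ p) :
    (∫⁻ t, (∫⁻ y, H t y ∂ν) ^ p ∂μ) ^ (1/p) ≤ ∫⁻ y, (∫⁻ t, H t y ^ p ∂μ) ^ (1/p) ∂ν := by
  rcases eq_or_lt_of_le hp with h1 | h1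
  · subst h1
    simp only [ENNReal.rpow_one, one_div_one]
    exact le_of_eq (lintegral_lintegral_swap hH.aemeasurable)
  have hp0 : (0:ℝ) < p := lt_trans one_pos h1
  have hpq := Real.HolderConjugate.conjExponent h1
  set R := ∫⁻ y, (∫⁻ t, H t y ^ p ∂μ) ^ (1/p) ∂ν with hRdef
  -- truncation
  set G : ℕ → α → β → ℝ≥0∞ := fun n t y =>
    (spanningSets μ n).indicator (fun _ => 1) t *
      ((spanningSets ν n).indicator (fun _ => 1) y * min (H t y) n) with hGdef
  have hGm : ∀ n, Measurable (Function.uncurry (G n)) := by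
    intro n
    exact (((measurable_one.indicator (measurableSet_spanningSets μ n)).comp
        measurable_fst).mul
      (((measurable_one.indicator (measurableSet_spanningSets ν n)).comp
        measurable_snd).mul (hH.min measurable_const)))
  have hGle : ∀ n t y, G n t y ≤ H t y := by
    intro n t y
    calc G n t y ≤ 1 * (1 * min (H t y) n) :=
          mul_le_mul' (Set.indicator_le_self _ _ t)
            (mul_le_mul' (Set.indicator_le_self _ _ y) le_rfl)
    _ ≤ H t y := by rw [one_mul, one_mul]; exact min_le_left _ _
  have hGmono : ∀ t y, Monotone fun n => G n t y := by
    intro t y n m hnm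
    refine mul_le_mul' (Set.indicator_le_indicator_of_subset
        (monotone_spanningSets μ hnm) (fun _ => zero_le) t)
      (mul_le_mul' (Set.indicator_le_indicator_of_subset
        (monotone_spanningSets ν hnm) (fun _ => zero_le) y)
      (min_le_min le_rfl (by exact_mod_cast Nat.cast_le.2 hnm)))
  have hGsup : ∀ t y, (⨆ n, G n t y) = H t y := by
    intro t y
    refine le_antisymm (iSup_le fun n => hGle n t y) ?_
    obtain ⟨n₁, hn₁⟩ : ∃ n, t ∈ spanningSets μ n := by
      have h := iUnion_spanningSets μ
      have : t ∈ ⋃ i, spanningSets μ i := by rw [h]; trivial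
      exact Set.mem_iUnion.1 this
    obtain ⟨n₂, hn₂⟩ : ∃ n, y ∈ spanningSets ν n := by
      have h := iUnion_spanningSets ν
      have : y ∈ ⋃ i, spanningSets ν i := by rw [h]; trivial
      exact Set.mem_iUnion.1 this
    have hmin : ∀ n : ℕ, min (H t y) n ≤ ⨆ m, G m t y := by
      intro n
      set m := max n (max n₁ n₂) with hm
      have ht : t ∈ spanningSets μ m :=
        monotone_spanningSets μ (le_trans (le_max_left n₁ n₂) (le_max_right _ _)) hn₁
      have hy : y ∈ spanningSets ν m :=
        monotone_spanningSets ν (le_trans (le_max_right n₁ n₂) (le_max_right _ _)) hn₂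
      have : G m t y = min (H t y) m := by
        rw [hGdef]
        simp [Set.indicator_of_mem ht, Set.indicator_of_mem hy]
      refine le_iSup_of_le m ?_
      rw [this]
      exact min_le_min le_rfl (by exact_mod_cast Nat.cast_le.2 (le_max_left _ _))
    rcases eq_or_ne (H t y) ∞ with htop | hfin
    · have : ∀ n : ℕ, (n : ℝ≥0∞) ≤ ⨆ m, G m t y := by
        intro n
        have := hmin n
        rwa [htop, min_eq_right le_top] at this
      calc H t y = ⊤ := htop
      _ = ⨆ n : ℕ, (n : ℝ≥0∞) := ENNReal.iSup_natCast.symm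
      _ ≤ ⨆ m, G m t y := iSup_le this
    · obtain ⟨k, hk⟩ := ENNReal.exists_nat_gt hfin
      have := hmin k
      rwa [min_eq_left hk.le] at this
  -- monotone convergence
  have hφmeas : ∀ n, Measurable fun t => ∫⁻ y, G n t y ∂ν := fun n =>
    (hGm n).lintegral_prod_right'
  have hsupφ : ∀ t, (⨆ n, ∫⁻ y, G n t y ∂ν) = ∫⁻ y, H t y ∂ν := by
    intro t
    have hswap := lintegral_iSup (μ := ν) (f := fun n y => G n t y)
      (fun n => by exact (hGm n).comp measurable_prodMk_left)
      (fun n m hnm y => hGmono t y hnm)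
    rw [← hswap]
    exact lintegral_congr fun y => hGsup t y
  have hIsup : (∫⁻ t, (∫⁻ y, H t y ∂ν) ^ p ∂μ)
      = ⨆ n, ∫⁻ t, (∫⁻ y, G n t y ∂ν) ^ p ∂μ := by
    have hswap := lintegral_iSup (μ := μ) (f := fun n t => (∫⁻ y, G n t y ∂ν) ^ p)
      (fun n => by exact (ENNReal.continuous_rpow_const.measurable).comp (hφmeas n))
      (fun n m hnm t => ENNReal.rpow_le_rpow
        (lintegral_mono fun y => hGmono t y hnm) hp0.le)
    rw [← hswap]
    refine lintegral_congr fun t => ?_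
    rw [← hsupφ t, my_iSup_rpow hp0]
  -- finiteness of truncations
  have hfinG : ∀ n, ∫⁻ t, (∫⁻ y, G n t y ∂ν) ^ p ∂μ ≠ ∞ := by
    intro n
    set c : ℝ≥0∞ := (n : ℝ≥0∞) * ν (spanningSets ν n) with hc
    have hb : ∀ t, (∫⁻ y, G n t y ∂ν) ^ p ≤
        (spanningSets μ n).indicator (fun _ => c ^ p) t := by
      intro t
      by_cases ht : t ∈ spanningSets μ n
      · rw [Set.indicator_of_mem ht]
        refine ENNReal.rpow_le_rpow ?_ hp0.le
        calc ∫⁻ y, G n t y ∂ν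
            ≤ ∫⁻ y, (spanningSets ν n).indicator (fun _ => (n : ℝ≥0∞)) y ∂ν := by
              refine lintegral_mono fun y => ?_
              calc G n t y ≤ 1 * ((spanningSets ν n).indicator (fun _ => 1) y *
                    min (H t y) n) :=
                    mul_le_mul' (Set.indicator_le_self _ _ t) le_rfl
              _ = (spanningSets ν n).indicator (fun _ => 1) y * min (H t y) n := one_mul _
              _ ≤ (spanningSets ν n).indicator (fun _ => (n:ℝ≥0∞)) y := by
                    by_cases hy : y ∈ spanningSets ν n
                    · simp only [Set.indicator_of_mem hy, one_mul]
                      exact min_le_right _ _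
                    · simp [Set.indicator_of_notMem hy]
        _ = c := lintegral_indicator_const (measurableSet_spanningSets ν n) _
      · rw [Set.indicator_of_notMem ht]
        have h0 : ∫⁻ y, G n t y ∂ν = 0 := by
          have : ∀ y, G n t y = 0 := by
            intro y
            rw [hGdef]
            simp [Set.indicator_of_notMem ht]
          simp [this]
        rw [h0, ENNReal.zero_rpow_of_pos hp0]
    have hle : ∫⁻ t, (∫⁻ y, G n t y ∂ν) ^ p ∂μ ≤ c ^ p * μ (spanningSets μ n) := by
      calc ∫⁻ t, (∫⁻ y, G n t y ∂ν) ^ p ∂μ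
          ≤ ∫⁻ t, (spanningSets μ n).indicator (fun _ => c ^ p) t ∂μ := lintegral_mono hb
      _ = c ^ p * μ (spanningSets μ n) :=
          lintegral_indicator_const (measurableSet_spanningSets μ n) _
    refine ne_top_of_le_ne_top ?_ hle
    refine (ENNReal.mul_lt_top ?_ (measure_spanningSets_lt_top μ n)).ne
    refine (ENNReal.rpow_lt_top_of_nonneg hp0.le ?_)
    exact (ENNReal.mul_lt_top (by simp) (measure_spanningSets_lt_top ν n)).ne
  -- conclusion
  have hper : ∀ n, (∫⁻ t, (∫⁻ y, G n t y ∂ν) ^ p ∂μ) ^ (1/p) ≤ R := by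
    intro n
    refine (lintegral_rpow_lintegral_le_aux (hGm n) hpq (hfinG n)).trans ?_
    refine lintegral_mono fun y => ?_
    refine ENNReal.rpow_le_rpow (lintegral_mono fun t => ?_) (by positivity)
    exact ENNReal.rpow_le_rpow (hGle n t y) hp0.le
  rw [hIsup, my_iSup_rpow (by positivity : (0:ℝ) < 1/p)]
  exact iSup_le hper

/-- Minkowski's integral inequality in `eLpNorm` form. -/
lemma eLpNorm_integral_le [SigmaFinite μ] [SigmaFinite ν]
    {f : β → α → ℂ} (hf : Measurable fun z : α × β => f z.2 z.1)
    {p : ℝ≥0∞} (hp : 1 ≤ p) :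
    eLpNorm (fun t => ∫ y, f y t ∂ν) p μ ≤ ∫⁻ y, eLpNorm (f y) p μ ∂ν := by
  set H : α → β → ℝ≥0∞ := fun t y => (‖f y t‖₊ : ℝ≥0∞) with hHdef
  have hHm : Measurable (Function.uncurry H) := hf.enorm
  by_cases hptop : p = ∞
  · subst hptop
    rw [eLpNorm_exponent_top]
    have h1 : eLpNormEssSup (fun t => ∫ y, f y t ∂ν) μ ≤
        essSup (fun t => ∫⁻ y, H t y ∂ν) μ :=
      essSup_mono_ae (Filter.Eventually.of_forall fun t =>
        enorm_integral_le_lintegral_enorm _)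
    refine h1.trans ((essSup_lintegral_le hHm).trans (le_of_eq ?_))
    refine lintegral_congr fun y => ?_
    rw [eLpNorm_exponent_top, eLpNormEssSup]
    rfl
  · have hp0 : p ≠ 0 := (lt_of_lt_of_le zero_lt_one hp).ne'
    rw [eLpNorm_eq_lintegral_rpow_enorm_toReal hp0 hptop]
    set r := p.toReal with hr
    have hr1 : 1 ≤ r := by
      have := ENNReal.toReal_mono hptop hp
      simpa using this
    have hr0 : 0 < r := lt_of_lt_of_le one_pos hr1
    calc (∫⁻ t, (‖∫ y, f y t ∂ν‖₊ : ℝ≥0∞) ^ r ∂μ) ^ (1/r)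
        ≤ (∫⁻ t, (∫⁻ y, H t y ∂ν) ^ r ∂μ) ^ (1/r) := by
          refine ENNReal.rpow_le_rpow (lintegral_mono fun t => ?_) (by positivity)
          exact ENNReal.rpow_le_rpow (enorm_integral_le_lintegral_enorm _) hr0.le
      _ ≤ ∫⁻ y, (∫⁻ t, H t y ^ r ∂μ) ^ (1/r) ∂ν := lintegral_rpow_lintegral_le hHm hr1
      _ = ∫⁻ y, eLpNorm (f y) p μ ∂ν := by
          refine lintegral_congr fun y => ?_
          rw [eLpNorm_eq_lintegral_rpow_enorm_toReal hp0 hptop]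
          rfl

end Aux

theorem retarded_potential_reversed_estimate (p : ℝ≥0∞) (hp : 1 ≤ p)
    (F : ℝ → R3 → ℂ) (hF : Measurable (Function.uncurry F)) :
    (∀ x : R3,
      eLpNorm (fun t => retardedPotential F t x) p volume ≤
        (ENNReal.ofReal (4 * π))⁻¹ *
          ∫⁻ y : R3, eLpNorm (fun t => F t y) p volume / (‖x - y‖₊ : ℝ≥0∞)) ∧
    essSup (fun x : R3 => eLpNorm (fun t => retardedPotential F t x) p volume) volume ≤
      (ENNReal.ofReal (4 * π))⁻¹ *
        katoNormE (fun y => eLpNorm (fun t => F t y) p volume) := by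
  have hπ := Real.pi_pos
  have h4π : (0:ℝ) < 4 * π := by linarith
  have hCne : (ENNReal.ofReal (4 * π))⁻¹ ≠ ∞ :=
    ENNReal.inv_ne_top.2 (ENNReal.ofReal_pos.2 h4π).ne'
  set N : R3 → ℝ≥0∞ := fun y => eLpNorm (fun t => F t y) p volume with hN
  have main : ∀ x : R3,
      eLpNorm (fun t => retardedPotential F t x) p volume ≤
        (ENNReal.ofReal (4 * π))⁻¹ * ∫⁻ y : R3, N y / (‖x - y‖₊ : ℝ≥0∞) := by
    intro x
    set f : R3 → ℝ → ℂ := fun y t => (4 * π * ‖x - y‖)⁻¹ • F (t - ‖x - y‖) y with hfdef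
    have hnm : Measurable fun z : ℝ × R3 => ‖x - z.2‖ :=
      ((continuous_const.sub continuous_snd).norm).measurable
    have hmeas : Measurable fun z : ℝ × R3 => f z.2 z.1 := by
      refine Measurable.smul (M := ℝ) ?_ ?_
      · exact ((measurable_const.mul hnm)).inv
      · exact hF.comp ((measurable_fst.sub hnm).prodMk measurable_snd)
    have h1 : eLpNorm (fun t => retardedPotential F t x) p volume ≤
        ∫⁻ y, eLpNorm (f y) p volume ∂(volume : Measure R3) :=
      eLpNorm_integral_le hmeas hp
    have h2 : ∀ y : R3, eLpNorm (f y) p volume =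
        (‖(4 * π * ‖x - y‖)⁻¹‖₊ : ℝ≥0∞) * N y := by
      intro y
      have hfy : f y = (4 * π * ‖x - y‖)⁻¹ • fun t => F (t - ‖x - y‖) y := rfl
      rw [hfy, eLpNorm_const_smul]
      congr 1
      have hg : AEStronglyMeasurable (fun t => F t y) volume :=
        (hF.comp (measurable_id.prodMk measurable_const)).aestronglyMeasurable
      have hmp : MeasurePreserving (fun t : ℝ => t - ‖x - y‖) volume volume :=
        measurePreserving_sub_right volume ‖x - y‖
      have h := eLpNorm_comp_measurePreserving (p := p) hg hmp
      simpa [Function.comp_def] using h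
    have hx : ∀ᵐ y : R3, y ≠ x := by
      have h0 : volume ({x} : Set R3) = 0 := measure_singleton x
      rw [ae_iff]
      convert h0 using 2
      ext y
      simp
    have h3 : ∫⁻ y, eLpNorm (f y) p volume ∂(volume : Measure R3) =
        ∫⁻ y, (ENNReal.ofReal (4 * π))⁻¹ * (N y / (‖x - y‖₊ : ℝ≥0∞)) ∂volume := by
      refine lintegral_congr_ae (hx.mono fun y hy => ?_)
      show eLpNorm (f y) p volume = (ENNReal.ofReal (4 * π))⁻¹ * (N y / (‖x - y‖₊ : ℝ≥0∞))
      rw [h2 y]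
      have hr : (0:ℝ) < ‖x - y‖ := norm_sub_pos_iff.2 (Ne.symm hy)
      have e1 : (‖(4 * π * ‖x - y‖)⁻¹‖₊ : ℝ≥0∞) = (ENNReal.ofReal (4 * π * ‖x - y‖))⁻¹ := by
        rw [← enorm_eq_nnnorm, Real.enorm_eq_ofReal (by positivity), ENNReal.ofReal_inv_of_pos (by positivity)]
      have e2 : ENNReal.ofReal (4 * π * ‖x - y‖) =
          ENNReal.ofReal (4 * π) * ENNReal.ofReal ‖x - y‖ := ENNReal.ofReal_mul h4π.le
      have e3 : ENNReal.ofReal ‖x - y‖ = (‖x - y‖₊ : ℝ≥0∞) := ofReal_norm _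
      rw [e1, e2, e3, ENNReal.mul_inv (Or.inl (ENNReal.ofReal_pos.2 h4π).ne')
        (Or.inl ENNReal.ofReal_ne_top), div_eq_mul_inv]
      ring
    rw [h3, lintegral_const_mul' _ _ hCne] at h1
    exact h1
  refine ⟨main, ?_⟩
  refine essSup_le_of_ae_le _ (Filter.Eventually.of_forall fun x => ?_)
  refine (main x).trans ?_
  refine mul_le_mul_right ?_ _
  have heq : ∫⁻ y, N y / (‖x - y‖₊ : ℝ≥0∞) = ∫⁻ w, N w / (‖w - x‖₊ : ℝ≥0∞) := by
    refine lintegral_congr fun y => ?_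
    congr 2
    rw [← neg_sub, nnnorm_neg]
  rw [heq]
  exact le_iSup (fun z : R3 => ∫⁻ w, N w / (‖w - z‖₊ : ℝ≥0∞)) x
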